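/- Let ε > 0, let x and y be independent random variables each distributed as Lap(1/ε), and for real numbers α, β, γ define P(α, β, γ) = P[x < α ∧ y < β ∧ x + y < γ]. Then for every τ ≥ 0, 1 ≤ P(α+τ, β+τ, γ)/P(α, β, γ) ≤ e^{4τε}. -/

import Mathlib

open MeasureTheory ProbabilityTheory
open scoped ENNReal

/-- The Laplace distribution `Lap(b)` on `ℝ`, with density `(1/(2b))·e^{−|x|/b}`. -/
noncomputable def lapMeasure (b : ℝ) : Measure ℝ :=
  volume.withDensity fun x => ENNReal.ofReal ((1 / (2 * b)) * Real.exp (-|x| / b))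

noncomputable def lapDen (ε : ℝ) (u : ℝ) : ℝ≥0∞ :=
  ENNReal.ofReal ((1 / (2 * (1 / ε))) * Real.exp (-|u| / (1 / ε)))

lemma lapDen_measurable (ε : ℝ) : Measurable (lapDen ε) := by
  apply Measurable.ennreal_ofReal
  fun_prop

lemma lapMeasure_eq (ε : ℝ) : lapMeasure (1 / ε) = volume.withDensity (lapDen ε) := rfl

lemma prod_lap (ε : ℝ) [SigmaFinite (lapMeasure (1 / ε))] :
    (lapMeasure (1 / ε)).prod (lapMeasure (1 / ε)) =
      ((volume : Measure ℝ).prod volume).withDensity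
        (fun p : ℝ × ℝ => lapDen ε p.1 * lapDen ε p.2) := by
  refine Measure.prod_eq fun s t hs ht => ?_
  rw [withDensity_apply _ (hs.prod ht), ← Measure.prod_restrict,
    lintegral_prod_mul (lapDen_measurable ε).aemeasurable (lapDen_measurable ε).aemeasurable,
    lapMeasure_eq, withDensity_apply _ hs, withDensity_apply _ ht]

lemma lapDen_shift {ε τ : ℝ} (hε : 0 < ε) (hτ : 0 ≤ τ) (u : ℝ) :
    lapDen ε (u + τ) ≤ ENNReal.ofReal (Real.exp (τ * ε)) * lapDen ε u := by
  unfold lapDen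
  rw [← ENNReal.ofReal_mul (Real.exp_nonneg _)]
  apply ENNReal.ofReal_le_ofReal
  have hc : (0:ℝ) ≤ 1 / (2 * (1 / ε)) := by positivity
  rw [mul_comm (Real.exp (τ * ε)), mul_assoc, ← Real.exp_add]
  apply mul_le_mul_of_nonneg_left _ hc
  apply Real.exp_le_exp.mpr
  have hd : ∀ a : ℝ, a / (1 / ε) = a * ε := fun a => by field_simp
  rw [hd, hd]
  have h1 : |u| ≤ |u + τ| + τ := by
    have h := abs_add_le (u + τ) (-τ)
    rw [abs_neg, abs_of_nonneg hτ] at h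
    simpa using h
  nlinarith [mul_le_mul_of_nonneg_right h1 hε.le]

def Sset (a b c : ℝ) : Set (ℝ × ℝ) := {p : ℝ × ℝ | p.1 < a ∧ p.2 < b ∧ p.1 + p.2 < c}

lemma Sset_meas (a b c : ℝ) : MeasurableSet (Sset a b c) := by
  apply MeasurableSet.inter
  · exact measurableSet_lt measurable_fst measurable_const
  apply MeasurableSet.inter
  · exact measurableSet_lt measurable_snd measurable_const
  · exact measurableSet_lt (measurable_fst.add measurable_snd) measurable_const

lemma key (ε τ α β γ : ℝ) [SigmaFinite (lapMeasure (1 / ε))] (hε : 0 < ε) (hτ : 0 ≤ τ) :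
    ((lapMeasure (1 / ε)).prod (lapMeasure (1 / ε))) (Sset (α + τ) (β + τ) γ) ≤
      ENNReal.ofReal (Real.exp (2 * τ * ε)) *
        ((lapMeasure (1 / ε)).prod (lapMeasure (1 / ε))) (Sset α β γ) := by
  set g : ℝ × ℝ → ℝ≥0∞ := fun p => lapDen ε p.1 * lapDen ε p.2 with hg
  have hgm : Measurable g :=
    ((lapDen_measurable ε).comp measurable_fst).mul ((lapDen_measurable ε).comp measurable_snd)
  have hvol : (volume : Measure (ℝ × ℝ)) = (volume : Measure ℝ).prod volume := rfl
  rw [prod_lap, ← hvol, withDensity_apply _ (Sset_meas _ _ _), withDensity_apply _ (Sset_meas _ _ _)]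
  calc ∫⁻ p in Sset (α + τ) (β + τ) γ, g p ∂(volume : Measure (ℝ × ℝ))
      = ∫⁻ p, (Sset (α + τ) (β + τ) γ).indicator g p ∂(volume : Measure (ℝ × ℝ)) :=
        (lintegral_indicator (Sset_meas _ _ _) g).symm
    _ = ∫⁻ p, (Sset (α + τ) (β + τ) γ).indicator g (p + (τ, τ)) ∂(volume : Measure (ℝ × ℝ)) :=
        (lintegral_add_right_eq_self _ (τ, τ)).symm
    _ ≤ ∫⁻ p, ENNReal.ofReal (Real.exp (2 * τ * ε)) * (Sset α β γ).indicator g p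
          ∂(volume : Measure (ℝ × ℝ)) := by
        apply lintegral_mono
        intro p
        dsimp only
        by_cases hp : p + (τ, τ) ∈ Sset (α + τ) (β + τ) γ
        · rw [Set.indicator_of_mem hp]
          obtain ⟨h1, h2, h3⟩ := hp
          simp only [Prod.fst_add, Prod.snd_add] at h1 h2 h3
          have hpS : p ∈ Sset α β γ := by
            refine ⟨by linarith, by linarith, by linarith⟩
          rw [Set.indicator_of_mem hpS]
          have : g (p + (τ, τ)) = lapDen ε (p.1 + τ) * lapDen ε (p.2 + τ) := rfl
          rw [this]
          calc lapDen ε (p.1 + τ) * lapDen ε (p.2 + τ)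
              ≤ (ENNReal.ofReal (Real.exp (τ * ε)) * lapDen ε p.1) *
                (ENNReal.ofReal (Real.exp (τ * ε)) * lapDen ε p.2) :=
                mul_le_mul' (lapDen_shift hε hτ _) (lapDen_shift hε hτ _)
            _ = (ENNReal.ofReal (Real.exp (τ * ε)) * ENNReal.ofReal (Real.exp (τ * ε))) * g p := by
                rw [hg]; ring
            _ = ENNReal.ofReal (Real.exp (2 * τ * ε)) * g p := by
                rw [← ENNReal.ofReal_mul (Real.exp_nonneg _), ← Real.exp_add]
                ring_nf
        · rw [Set.indicator_of_notMem hp]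
          exact zero_le
    _ = ENNReal.ofReal (Real.exp (2 * τ * ε)) *
          ∫⁻ p, (Sset α β γ).indicator g p ∂(volume : Measure (ℝ × ℝ)) :=
        lintegral_const_mul _ (hgm.indicator (Sset_meas _ _ _))
    _ = ENNReal.ofReal (Real.exp (2 * τ * ε)) *
          ∫⁻ p in Sset α β γ, g p ∂(volume : Measure (ℝ × ℝ)) := by
        rw [lintegral_indicator (Sset_meas α β γ) g]

theorem laplace_mish_mash
    (Ω : Type) [MeasurableSpace Ω] (μ : Measure Ω) [IsProbabilityMeasure μ]
    (ε : ℝ) (hε : 0 < ε) (x y : Ω → ℝ) (hx : Measurable x) (hy : Measurable y)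
    (hxd : μ.map x = lapMeasure (1 / ε)) (hyd : μ.map y = lapMeasure (1 / ε))
    (hind : IndepFun x y μ) (α β γ τ : ℝ) (hτ : 0 ≤ τ) :
    μ {ω | x ω < α ∧ y ω < β ∧ x ω + y ω < γ} ≤
        μ {ω | x ω < α + τ ∧ y ω < β + τ ∧ x ω + y ω < γ} ∧
      μ {ω | x ω < α + τ ∧ y ω < β + τ ∧ x ω + y ω < γ} ≤
        ENNReal.ofReal (Real.exp (4 * τ * ε)) *
          μ {ω | x ω < α ∧ y ω < β ∧ x ω + y ω < γ} := by
  have hP : IsProbabilityMeasure (lapMeasure (1 / ε)) :=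
    hxd ▸ Measure.isProbabilityMeasure_map hx.aemeasurable
  have hprod : μ.map (fun ω => (x ω, y ω)) = (lapMeasure (1 / ε)).prod (lapMeasure (1 / ε)) := by
    have h := (indepFun_iff_map_prod_eq_prod_map_map hx.aemeasurable hy.aemeasurable).mp hind
    rw [hxd, hyd] at h
    exact h
  have heq : ∀ a b c : ℝ, μ {ω | x ω < a ∧ y ω < b ∧ x ω + y ω < c} =
      ((lapMeasure (1 / ε)).prod (lapMeasure (1 / ε))) (Sset a b c) := by
    intro a b c
    rw [← hprod, Measure.map_apply (hx.prodMk hy) (Sset_meas a b c)]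
    rfl
  constructor
  · apply measure_mono
    intro ω ⟨h1, h2, h3⟩
    exact ⟨by linarith, by linarith, h3⟩
  · rw [heq, heq]
    calc ((lapMeasure (1 / ε)).prod (lapMeasure (1 / ε))) (Sset (α + τ) (β + τ) γ)
        ≤ ENNReal.ofReal (Real.exp (2 * τ * ε)) *
            ((lapMeasure (1 / ε)).prod (lapMeasure (1 / ε))) (Sset α β γ) := key ε τ α β γ hε hτ
      _ ≤ ENNReal.ofReal (Real.exp (4 * τ * ε)) *
            ((lapMeasure (1 / ε)).prod (lapMeasure (1 / ε))) (Sset α β γ) := by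
          apply mul_le_mul_left
          apply ENNReal.ofReal_le_ofReal
          apply Real.exp_le_exp.mpr
          nlinarith
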